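/- Let K be a number field of degree n over ℚ, let Z_K be its ring of integers, and let A be the set of all principal ideals of Z_K generated by an irreducible element (atom) of Z_K. Then the series ∑_{𝔞 ∈ A} N(𝔞)^{-1/n} diverges, i.e., the family (N(𝔞)^{-1/n})_{𝔞 ∈ A} of nonnegative real numbers is not summable. -/

import Mathlib

/-- **Corollary 1.** Let `K` be a number field of degree `n` and `A` the set of principal ideals
of `Z_K` generated by an atom. Then `∑_{𝔞 ∈ A} N(𝔞)^{-1/n}` diverges. -/
theorem stmt2 (K : Type*) [Field K] [NumberField K]
    (n : ℕ) (hn : n = Module.finrank ℚ K)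
    (A : Set (Ideal (NumberField.RingOfIntegers K)))
    (hA : A = {I : Ideal (NumberField.RingOfIntegers K) |
      ∃ a : NumberField.RingOfIntegers K, Irreducible a ∧ I = Ideal.span {a}}) :
    ¬ Summable (fun I : A =>
      ((Ideal.absNorm (I : Ideal (NumberField.RingOfIntegers K)) : ℝ)) ^ (-(1 : ℝ) / n)) := by
  classical
  set R := NumberField.RingOfIntegers K
  have hn0 : 0 < n := by
    rw [hn]; exact Module.finrank_pos
  -- for each rational prime p, pick an irreducible factor of p in R
  have key : ∀ p : Nat.Primes, ∃ a : R, Irreducible a ∧ a ∣ ((p : ℕ) : R) := by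
    intro p
    have hne : ((p : ℕ) : R) ≠ 0 := by
      exact_mod_cast Nat.cast_ne_zero.mpr p.2.ne_zero
    have hnu : ¬ IsUnit ((p : ℕ) : R) := by
      intro h
      have htop : Ideal.span {((p : ℕ) : R)} = ⊤ := Ideal.span_singleton_eq_top.mpr h
      have h1 : Ideal.absNorm (Ideal.span {((p : ℕ) : R)}) = 1 :=
        Ideal.absNorm_eq_one_iff.mpr htop
      -- compute the norm of p
      have h2 : Ideal.absNorm (Ideal.span {((p : ℕ) : R)}) =
          (p : ℕ) ^ Module.finrank ℤ R := by
        rw [Ideal.absNorm_span_singleton]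
        have : ((p : ℕ) : R) = algebraMap ℤ R ((p : ℕ) : ℤ) := by push_cast; rfl
        rw [this, Algebra.norm_algebraMap_of_basis (Module.Free.chooseBasis ℤ R),
          Module.finrank_eq_card_chooseBasisIndex]
        push_cast
        rw [Int.natAbs_pow]
        simp
      rw [h2] at h1
      have hfr : 0 < Module.finrank ℤ R := Module.finrank_pos
      have hp1 : (p : ℕ) = 1 := (pow_eq_one_iff.mp h1).resolve_right hfr.ne'
      exact p.2.one_lt.ne' hp1
    haveI : WfDvdMonoid R := IsNoetherianRing.wfDvdMonoid
    obtain ⟨a, ha, hdvd⟩ := WfDvdMonoid.exists_irreducible_factor hnu hne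
    exact ⟨a, ha, hdvd⟩
  choose a ha hdvd using key
  -- the map from primes to A
  have hmem : ∀ p : Nat.Primes, Ideal.span {a p} ∈ A := by
    intro p; rw [hA]; exact ⟨a p, ha p, rfl⟩
  intro hsum
  set f : Nat.Primes → A := fun p => ⟨Ideal.span {a p}, hmem p⟩ with hf
  have hinj : Function.Injective f := by
    intro p q hpq
    by_contra hne
    have hspan : Ideal.span {a p} = Ideal.span {a q} := congrArg Subtype.val hpq
    have hpq' : a p ∣ a q := by
      rw [← Ideal.span_singleton_le_span_singleton]
      exact hspan.ge
    have h1 : a p ∣ ((p : ℕ) : R) := hdvd p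
    have h2 : a p ∣ ((q : ℕ) : R) := hpq'.trans (hdvd q)
    have hco : IsCoprime ((p : ℕ) : ℤ) ((q : ℕ) : ℤ) := by
      rw [Int.isCoprime_iff_gcd_eq_one]
      exact_mod_cast (Nat.coprime_primes p.2 q.2).mpr
        (fun h => hne (Nat.Primes.coe_nat_injective h))
    have hco' : IsCoprime ((p : ℕ) : R) ((q : ℕ) : R) := by
      have := hco.map (algebraMap ℤ R)
      simpa using this
    exact (ha p).not_isUnit (hco'.isUnit_of_dvd' h1 h2)
  -- transport summability
  have hsum2 : Summable (fun p : Nat.Primes =>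
      ((Ideal.absNorm ((f p : Ideal R)) : ℝ)) ^ (-(1 : ℝ) / n)) :=
    hsum.comp_injective hinj
  -- compare with p^{-1}
  have hbound : ∀ p : Nat.Primes,
      ((p : ℕ) : ℝ) ^ (-1 : ℝ) ≤
        ((Ideal.absNorm ((f p : Ideal R)) : ℝ)) ^ (-(1 : ℝ) / n) := by
    intro p
    have hdvdN : Ideal.absNorm (Ideal.span {a p}) ∣ (p : ℕ) ^ Module.finrank ℤ R := by
      have hle : Ideal.span {((p : ℕ) : R)} ≤ Ideal.span {a p} :=
        Ideal.span_singleton_le_span_singleton.mpr (hdvd p)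
      have := Ideal.absNorm_dvd_absNorm_of_le hle
      rwa [show Ideal.absNorm (Ideal.span {((p : ℕ) : R)}) =
          (p : ℕ) ^ Module.finrank ℤ R from ?_] at this
      rw [Ideal.absNorm_span_singleton]
      have : ((p : ℕ) : R) = algebraMap ℤ R ((p : ℕ) : ℤ) := by push_cast; rfl
      rw [this, Algebra.norm_algebraMap_of_basis (Module.Free.chooseBasis ℤ R),
        Module.finrank_eq_card_chooseBasisIndex]
      push_cast
      rw [Int.natAbs_pow]
      simp
    have hfr : Module.finrank ℤ R = n := by
      rw [hn]; exact NumberField.RingOfIntegers.rank K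
    rw [hfr] at hdvdN
    have hNpos : 0 < Ideal.absNorm (Ideal.span {a p}) := by
      refine Nat.pos_of_dvd_of_pos hdvdN ?_
      exact pow_pos p.2.pos n
    have hNle : (Ideal.absNorm (Ideal.span {a p}) : ℝ) ≤ ((p : ℕ) : ℝ) ^ n := by
      exact_mod_cast Nat.cast_le.mpr (Nat.le_of_dvd (pow_pos p.2.pos n) hdvdN)
    have hstep : ((((p : ℕ) : ℝ)) ^ n) ^ (-(1 : ℝ) / n) ≤
        ((Ideal.absNorm (Ideal.span {a p}) : ℝ)) ^ (-(1 : ℝ) / n) := by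
      refine Real.rpow_le_rpow_of_nonpos ?_ hNle ?_
      · exact_mod_cast hNpos
      · apply div_nonpos_of_nonpos_of_nonneg <;> simp [Nat.cast_nonneg]
    have heq : ((((p : ℕ) : ℝ)) ^ n) ^ (-(1 : ℝ) / n) = ((p : ℕ) : ℝ) ^ (-1 : ℝ) := by
      rw [← Real.rpow_natCast ((p : ℕ) : ℝ) n, ← Real.rpow_mul (by positivity)]
      congr 1
      field_simp
    rw [← heq]
    exact hstep
  have hsum3 : Summable (fun p : Nat.Primes => ((p : ℕ) : ℝ) ^ (-1 : ℝ)) :=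
    Summable.of_nonneg_of_le (fun p => Real.rpow_nonneg (by positivity) _) hbound hsum2
  have := Nat.Primes.summable_rpow.mp hsum3
  linarith
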